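/- Assume the weak form of Szpiro's conjecture. Let s be a fixed positive integer and let f(x,y) = x^{2s}·y^s + y^{2s}·x^s (respectively f(x,y) = x^{2s}·y^s − y^{2s}·x^s), and assume f(x,y) has at least three pairwise non-proportional linear factors over ℂ. Let p_1 < p_2 < ··· < p_q be primes, b a fixed non-zero integer, and A_1,...,A_l fixed positive integers. Then the equation b·p_1^{z_1}···p_q^{z_q}·(n_1!·A_1^{n_1})···(n_l!·A_l^{n_l}) = f(x,y) has only finitely many solutions in integers z_1,...,z_q ≥ 0, positive integers n_1,...,n_l, and integers x, y with gcd(x,y) = 1. -/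

import Mathlib

/-- The algebraic radical of an integer: the product of the distinct primes dividing it. -/
def rad (m : ℤ) : ℕ := ∏ p ∈ m.natAbs.primeFactors, p

/-- The weak form of Szpiro's conjecture: there is a constant `s > 0` such that for all
non-zero pairwise coprime integers `A, B, C` with `A + B = C` one has
`|A*B*C| < rad (A*B*C) ^ s`. -/
def WeakSzpiroConjecture : Prop :=
  ∃ s : ℝ, 0 < s ∧ ∀ A B C : ℤ, A ≠ 0 → B ≠ 0 → C ≠ 0 →
    IsCoprime A B → IsCoprime A C → IsCoprime B C → A + B = C →
    ((|A * B * C| : ℤ) : ℝ) < (rad (A * B * C) : ℝ) ^ s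

lemma rad_pos (m : ℤ) : 0 < rad m :=
  Finset.prod_pos fun _ hp => (Nat.prime_of_mem_primeFactors hp).pos

lemma rad_le_natAbs (m : ℤ) (hm : m ≠ 0) : rad m ≤ m.natAbs :=
  Nat.le_of_dvd (Int.natAbs_pos.mpr hm) (Nat.prod_primeFactors_dvd _)

lemma rad_mul_le (m n : ℤ) (hm : m ≠ 0) (hn : n ≠ 0) : rad (m * n) ≤ rad m * rad n := by
  unfold rad
  rw [Int.natAbs_mul, Nat.primeFactors_mul (Int.natAbs_ne_zero.mpr hm) (Int.natAbs_ne_zero.mpr hn)]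
  calc ∏ p ∈ m.natAbs.primeFactors ∪ n.natAbs.primeFactors, p
      = (∏ p ∈ m.natAbs.primeFactors, p) * ∏ p ∈ n.natAbs.primeFactors \ m.natAbs.primeFactors, p := by
        rw [← Finset.prod_union Finset.disjoint_sdiff, Finset.union_sdiff_self_eq_union]
    _ ≤ _ := by
        refine Nat.mul_le_mul_left _ (Finset.prod_le_prod_of_subset_of_one_le' (Finset.sdiff_subset) ?_)
        intro i hi _; exact (Nat.prime_of_mem_primeFactors hi).one_le

lemma rad_prod_le {ι : Type*} (t : Finset ι) (f : ι → ℤ) (hf : ∀ i ∈ t, f i ≠ 0) :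
    rad (∏ i ∈ t, f i) ≤ ∏ i ∈ t, rad (f i) := by
  classical
  induction t using Finset.induction_on with
  | empty => simp [rad]
  | @insert a tt hx ih =>
    rw [Finset.prod_insert hx, Finset.prod_insert hx]
    calc rad (f a * ∏ i ∈ tt, f i) ≤ rad (f a) * rad (∏ i ∈ tt, f i) :=
          rad_mul_le _ _ (hf a (Finset.mem_insert_self _ _))
            (Finset.prod_ne_zero_iff.mpr fun i hi => hf i (Finset.mem_insert_of_mem hi))
      _ ≤ _ := Nat.mul_le_mul_left _ (ih fun i hi => hf i (Finset.mem_insert_of_mem hi))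

lemma rad_cast (m : ℕ) : rad (m : ℤ) = ∏ p ∈ m.primeFactors, p := by simp [rad]

lemma rad_nat_le (m : ℕ) (hm : m ≠ 0) : rad (m : ℤ) ≤ m := by
  simpa using rad_le_natAbs (m : ℤ) (by exact_mod_cast hm)

lemma rad_pow_le (a : ℕ) (ha : 0 < a) (z : ℕ) : rad ((a : ℤ) ^ z) ≤ a := by
  rcases Nat.eq_zero_or_pos z with rfl | hz
  · simp [rad]; omega
  · have : ((a : ℤ) ^ z) = ((a ^ z : ℕ) : ℤ) := by push_cast; ring
    rw [this, rad_cast, Nat.primeFactors_pow a (Nat.pos_iff_ne_zero.mp hz), ← rad_cast]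
    exact rad_nat_le a (Nat.pos_iff_ne_zero.mp ha)

lemma rad_factorial_le (n : ℕ) : rad ((n.factorial : ℕ) : ℤ) ≤ 4 ^ n := by
  rw [rad_cast]
  calc ∏ p ∈ n.factorial.primeFactors, p ≤ primorial n := by
        refine Finset.prod_le_prod_of_subset_of_one_le' ?_ ?_
        · intro r hr
          have hrp := Nat.prime_of_mem_primeFactors hr
          have h2 := (Nat.Prime.dvd_factorial hrp).mp (Nat.dvd_of_mem_primeFactors hr)
          simp only [primorial, Finset.mem_filter, Finset.mem_range, Nat.lt_succ_iff]
          exact ⟨h2, hrp⟩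
        · intro i hi _
          simp only [primorial, Finset.mem_filter] at hi
          exact hi.2.one_le
    _ ≤ 4 ^ n := primorial_le_4_pow n

lemma pow_le_factorial_mul (D : ℕ) (hD : 1 ≤ D) : ∀ n, D ^ n ≤ n.factorial * D ^ D := by
  intro n
  induction n with
  | zero => simpa using Nat.one_le_pow _ _ hD
  | succ n ih =>
    rcases le_or_gt D (n+1) with h | h
    · calc D ^ (n+1) = D * D ^ n := by ring
        _ ≤ (n+1) * (n.factorial * D ^ D) := Nat.mul_le_mul h ih
        _ = (n+1).factorial * D ^ D := by rw [Nat.factorial_succ]; ring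
    · calc D ^ (n+1) ≤ D ^ D := Nat.pow_le_pow_right hD (le_of_lt h)
        _ ≤ (n+1).factorial * D ^ D := Nat.le_mul_of_pos_left _ (n+1).factorial_pos

lemma factorial_growth (C D n : ℕ) (hC : 2 ≤ C) (hD : 1 ≤ D)
    (h : n.factorial < C * D ^ n) : n ≤ (C*D)^(C*D) + 1 := by
  by_contra hn
  push_neg at hn
  set E := C * D with hE
  have hEn : E ^ n ≤ n.factorial * E ^ E :=
    pow_le_factorial_mul E (by rw [hE]; exact Nat.mul_pos (by omega) hD) n
  obtain ⟨m, rfl⟩ : ∃ m, n = m + 1 := ⟨n - 1, by omega⟩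
  have h1 : m + 1 ≤ 2 ^ m := by
    have := Nat.lt_two_pow_self (n := m); omega
  have h2 : 2 ^ m ≤ C ^ m := Nat.pow_le_pow_left hC m
  have h3 : E ^ E + 2 ≤ C ^ m := by omega
  have key : E ^ (m+1) = C ^ m * (C * D ^ (m+1)) := by rw [hE]; ring
  rw [key] at hEn
  have h4 : (E ^ E + 2) * ((m+1).factorial + 1) ≤ C ^ m * (C * D ^ (m+1)) :=
    Nat.mul_le_mul h3 h
  have h5 : 0 < (m+1).factorial := (m+1).factorial_pos
  nlinarith [hEn, h4, h5]

/-- Assume the weak form of Szpiro's conjecture. Let `s` be a fixed positive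
integer and `f(x,y) = x^{2s} y^s + ε y^{2s} x^s` with `ε = 1` (resp. `ε = -1`), and assume
`f` has at least three pairwise non-proportional linear factors over `ℂ`. Let
`p₁ < ⋯ < p_q` be primes, `b` a fixed non-zero integer and `A 0, ..., A (l-1)` fixed positive
integers. Then `b p₁^{z₁} ⋯ p_q^{z_q} (n₁! A₁^{n₁}) ⋯ (n_l! A_l^{n_l}) = f(x,y)` has only
finitely many solutions in integers `z₁, ..., z_q ≥ 0`, positive integers `n₁, ..., n_l` and
integers `x, y` with `gcd(x,y) = 1`. -/
theorem stmt_11 (hsz : WeakSzpiroConjecture) (s : ℕ) (hs : 0 < s) (ε : ℤ)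
    (hε : ε = 1 ∨ ε = -1)
    (hfac : ∃ c : Fin 3 → ℂ × ℂ, (∀ i, c i ≠ 0) ∧
      (∀ i, (MvPolynomial.C (c i).1 * MvPolynomial.X 0 +
          MvPolynomial.C (c i).2 * MvPolynomial.X 1) ∣
        ((MvPolynomial.X 0) ^ (2 * s) * (MvPolynomial.X 1) ^ s +
          MvPolynomial.C (ε : ℂ) * (MvPolynomial.X 1) ^ (2 * s) * (MvPolynomial.X 0) ^ s :
            MvPolynomial (Fin 2) ℂ)) ∧
      ∀ i j, i ≠ j → ∀ t : ℂ, c i ≠ t • c j)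
    (q : ℕ) (p : Fin q → ℕ) (hp : ∀ i, (p i).Prime) (hpmono : StrictMono p)
    (b : ℤ) (hb : b ≠ 0) (l : ℕ) (A : Fin l → ℕ) (hA : ∀ i, 0 < A i) :
    {t : (Fin q → ℕ) × (Fin l → ℕ) × ℤ × ℤ | (∀ j, 0 < t.2.1 j) ∧
      Int.gcd t.2.2.1 t.2.2.2 = 1 ∧
      b * (∏ j, (p j : ℤ) ^ t.1 j) *
          ∏ i, (((t.2.1 i).factorial : ℤ) * (A i : ℤ) ^ (t.2.1 i)) =
        t.2.2.1 ^ (2 * s) * t.2.2.2 ^ s + ε * t.2.2.2 ^ (2 * s) * t.2.2.1 ^ s}.Finite := by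
  classical
  obtain ⟨κ, hκ, hszp⟩ := hsz
  set k := ⌈κ⌉₊ with hkdef
  have hk1 : 1 ≤ k := Nat.one_le_iff_ne_zero.mpr (by
    simp [hkdef, Nat.ceil_eq_zero, not_le, hκ])
  set R : ℕ := b.natAbs * (∏ j, p j) * (∏ i, A i) with hRdef
  have hRpos : 0 < R := by
    refine Nat.mul_pos (Nat.mul_pos (Int.natAbs_pos.mpr hb) ?_) ?_
    · exact Finset.prod_pos fun j _ => (hp j).pos
    · exact Finset.prod_pos fun i _ => hA i
  set C : ℕ := R ^ k with hCdef
  set D : ℕ := 4 ^ k with hDdef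
  have hD4 : 4 ≤ D := by
    calc 4 = 4 ^ 1 := (pow_one 4).symm
      _ ≤ D := Nat.pow_le_pow_right (by norm_num) hk1
  have hD1 : 1 ≤ D := by omega
  have hCpos : 0 < C := pow_pos hRpos k
  set C₃ : ℕ := C * D ^ (D * l) + 2 with hC3def
  set N₀ : ℕ := (C₃ * D) ^ (C₃ * D) + 1 with hN0def
  set M : ℕ := C * D ^ (l * N₀) with hMdef
  set B : ℕ := M + N₀ with hBdef
  apply Set.Finite.subset (Set.Finite.prod (Set.Finite.pi fun _ : Fin q => Set.finite_Iic B)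
    (Set.Finite.prod (Set.Finite.pi fun _ : Fin l => Set.finite_Iic B)
      (Set.Finite.prod (Set.finite_Icc (-(B:ℤ)) B) (Set.finite_Icc (-(B:ℤ)) B))))
  rintro ⟨z, n, x, y⟩ ⟨hn, hg, heq⟩
  simp only [Set.mem_setOf_eq] at heq hn hg
  -- natural number versions of the left-hand side
  set P1 : ℕ := ∏ j, p j ^ z j with hP1def
  set P2 : ℕ := ∏ i, (n i).factorial * A i ^ n i with hP2def
  have hP1pos : 0 < P1 := Finset.prod_pos fun j _ => pow_pos (hp j).pos _
  have hP2pos : 0 < P2 := Finset.prod_pos fun i _ =>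
    Nat.mul_pos (n i).factorial_pos (pow_pos (hA i) _)
  set W : ℕ := P1 * P2 with hWdef
  have hWpos : 0 < W := Nat.mul_pos hP1pos hP2pos
  have hWc : (b : ℤ) * (W : ℕ) =
      b * (∏ j, (p j : ℤ) ^ z j) * ∏ i, ((n i).factorial : ℤ) * (A i : ℤ) ^ (n i) := by
    rw [hWdef, hP1def, hP2def]; push_cast; ring
  set w : ℤ := x ^ s + ε * y ^ s with hwdef
  have hfactz : x ^ (2*s) * y ^ s + ε * y ^ (2*s) * x ^ s = x ^ s * y ^ s * w := by
    have e1 : x ^ (2*s) = x ^ s * x ^ s := by rw [two_mul, pow_add]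
    have e2 : y ^ (2*s) = y ^ s * y ^ s := by rw [two_mul, pow_add]
    rw [e1, e2, hwdef]; ring
  have heqW : (b : ℤ) * (W : ℕ) = x ^ s * y ^ s * w := by rw [hWc, heq, hfactz]
  have hbW0 : (b : ℤ) * (W : ℕ) ≠ 0 :=
    mul_ne_zero hb (by exact_mod_cast hWpos.ne')
  have hx0 : x ≠ 0 := by
    intro h; apply hbW0; rw [heqW, h]; simp [zero_pow hs.ne']
  have hy0 : y ≠ 0 := by
    intro h; apply hbW0; rw [heqW, h]; simp [zero_pow hs.ne']
  have hw0 : w ≠ 0 := by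
    intro h; apply hbW0; rw [heqW, h]; simp
  have hco : IsCoprime x y := Int.isCoprime_iff_gcd_eq_one.mpr hg
  have hab : IsCoprime (x ^ s) (ε * y ^ s) := by
    rcases hε with rfl | rfl
    · simpa using hco.pow (m := s) (n := s)
    · simpa using (hco.pow (m := s) (n := s)).neg_right
  have ha0 : x ^ s ≠ 0 := pow_ne_zero _ hx0
  have hbb0 : ε * y ^ s ≠ 0 :=
    mul_ne_zero (by rcases hε with rfl | rfl <;> norm_num) (pow_ne_zero _ hy0)
  have hac : IsCoprime (x ^ s) w := by
    have h := hab.add_mul_left_right 1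
    rw [mul_one] at h
    rw [hwdef]
    exact (add_comm (ε * y ^ s) (x ^ s)) ▸ h
  have hbc : IsCoprime (ε * y ^ s) w := by
    have h := hab.symm.add_mul_left_right 1
    rw [mul_one] at h
    rw [hwdef]; exact h
  have hS := hszp (x ^ s) (ε * y ^ s) w ha0 hbb0 hw0 hab hac hbc (by rw [hwdef])
  have habc : x ^ s * (ε * y ^ s) * w = ε * ((b : ℤ) * (W : ℕ)) := by
    rw [heqW]; ring
  have hεabs : ε.natAbs = 1 := by rcases hε with rfl | rfl <;> rfl
  have hnatAbs : (x ^ s * (ε * y ^ s) * w).natAbs = ((b : ℤ) * (W : ℕ)).natAbs := by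
    rw [habc, Int.natAbs_mul, hεabs, one_mul]
  set r : ℕ := rad ((b : ℤ) * (W : ℕ)) with hrdef
  have hradeq : rad (x ^ s * (ε * y ^ s) * w) = r := by
    rw [hrdef]; unfold rad; rw [hnatAbs]
  have hr1 : 1 ≤ r := rad_pos _
  -- convert Szpiro's inequality to a natural-number inequality
  have hkey : b.natAbs * W < r ^ k := by
    have h1 : ((((b : ℤ) * (W : ℕ)).natAbs : ℤ) : ℝ) < (r : ℝ) ^ κ := by
      rw [← hnatAbs, ← hradeq, ← Int.abs_eq_natAbs]
      exact hS
    have h2 : (r : ℝ) ^ κ ≤ (r : ℝ) ^ (k : ℝ) :=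
      Real.rpow_le_rpow_of_exponent_le (by exact_mod_cast hr1) (Nat.le_ceil κ)
    have h3 : (r : ℝ) ^ (k : ℝ) = ((r ^ k : ℕ) : ℝ) := by
      rw [Real.rpow_natCast]; push_cast; ring
    have h4 : ((((b : ℤ) * (W : ℕ)).natAbs : ℕ) : ℝ) < ((r ^ k : ℕ) : ℝ) := by
      rw [← h3]
      refine lt_of_lt_of_le ?_ h2
      rwa [Int.cast_natCast] at h1
    have h5 : ((b : ℤ) * (W : ℕ)).natAbs < r ^ k := by exact_mod_cast h4
    rwa [Int.natAbs_mul, Int.natAbs_natCast] at h5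
  set N : ℕ := ∑ i, n i with hNdef
  -- bound the radical
  have hr2 : r ≤ R * 4 ^ N := by
    have c0 : r ≤ rad b * rad ((W : ℕ) : ℤ) :=
      rad_mul_le _ _ hb (by exact_mod_cast hWpos.ne')
    have cW : ((W : ℕ) : ℤ) = ((P1 : ℕ) : ℤ) * ((P2 : ℕ) : ℤ) := by
      rw [hWdef]; push_cast; ring
    have cWm : rad ((W : ℕ) : ℤ) ≤ rad ((P1 : ℕ) : ℤ) * rad ((P2 : ℕ) : ℤ) := by
      rw [cW]
      exact rad_mul_le _ _ (by exact_mod_cast hP1pos.ne') (by exact_mod_cast hP2pos.ne')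
    have c1 : rad ((P1 : ℕ) : ℤ) ≤ ∏ j, p j := by
      have e : ((P1 : ℕ) : ℤ) = ∏ j, (p j : ℤ) ^ z j := by rw [hP1def]; push_cast; ring
      rw [e]
      calc rad (∏ j, (p j : ℤ) ^ z j) ≤ ∏ j, rad ((p j : ℤ) ^ z j) :=
            rad_prod_le _ _ fun j _ => pow_ne_zero _ (by exact_mod_cast (hp j).pos.ne')
        _ ≤ ∏ j, p j := Finset.prod_le_prod' fun j _ => rad_pow_le _ (hp j).pos _
    have c2 : rad ((P2 : ℕ) : ℤ) ≤ ∏ i, 4 ^ (n i) * A i := by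
      have e : ((P2 : ℕ) : ℤ) = ∏ i, ((n i).factorial : ℤ) * (A i : ℤ) ^ (n i) := by
        rw [hP2def]; push_cast; ring
      rw [e]
      calc rad (∏ i, ((n i).factorial : ℤ) * (A i : ℤ) ^ (n i))
          ≤ ∏ i, rad (((n i).factorial : ℤ) * (A i : ℤ) ^ (n i)) :=
            rad_prod_le _ _ fun i _ => mul_ne_zero
              (by exact_mod_cast (n i).factorial_pos.ne')
              (pow_ne_zero _ (by exact_mod_cast (hA i).ne'))
        _ ≤ ∏ i, 4 ^ (n i) * A i := by
            refine Finset.prod_le_prod' fun i _ => ?_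
            calc rad (((n i).factorial : ℤ) * (A i : ℤ) ^ (n i))
                ≤ rad ((n i).factorial : ℤ) * rad ((A i : ℤ) ^ (n i)) :=
                  rad_mul_le _ _ (by exact_mod_cast (n i).factorial_pos.ne')
                    (pow_ne_zero _ (by exact_mod_cast (hA i).ne'))
              _ ≤ 4 ^ (n i) * A i :=
                  Nat.mul_le_mul (rad_factorial_le (n i)) (rad_pow_le _ (hA i) _)
    have c3 : (∏ i, 4 ^ (n i) * A i) = 4 ^ N * ∏ i, A i := by
      rw [Finset.prod_mul_distrib, Finset.prod_pow_eq_pow_sum, hNdef]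
    calc r ≤ rad b * (rad ((P1 : ℕ) : ℤ) * rad ((P2 : ℕ) : ℤ)) :=
          le_trans c0 (Nat.mul_le_mul_left _ cWm)
      _ ≤ b.natAbs * ((∏ j, p j) * (4 ^ N * ∏ i, A i)) := by
          rw [← c3]
          exact Nat.mul_le_mul (rad_le_natAbs b hb) (Nat.mul_le_mul c1 c2)
      _ = R * 4 ^ N := by rw [hRdef]; ring
  have hBig : b.natAbs * W < C * D ^ N := by
    calc b.natAbs * W < r ^ k := hkey
      _ ≤ (R * 4 ^ N) ^ k := Nat.pow_le_pow_left hr2 k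
      _ = C * D ^ N := by
          rw [mul_pow, hCdef, hDdef, ← pow_mul, ← pow_mul, mul_comm N k]
  have hprodfac : ∏ i, (n i).factorial ≤ P2 :=
    Finset.prod_le_prod' fun i _ => Nat.le_mul_of_pos_right _ (pow_pos (hA i) _)
  have hmain : P1 * ∏ i, (n i).factorial < C * D ^ N := by
    calc P1 * ∏ i, (n i).factorial ≤ P1 * P2 := Nat.mul_le_mul_left _ hprodfac
      _ ≤ b.natAbs * W := by
          rw [hWdef]
          exact Nat.le_mul_of_pos_left _ (Int.natAbs_pos.mpr hb)
      _ < C * D ^ N := hBig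
  -- bound each n i
  have hni : ∀ i, n i ≤ N₀ := by
    intro i₀
    set P : ℕ := ∏ i ∈ Finset.univ.erase i₀, (n i).factorial with hPdef
    have hPpos : 0 < P := Finset.prod_pos fun i _ => (n i).factorial_pos
    have e1 : ∏ i, (n i).factorial = (n i₀).factorial * P :=
      (Finset.mul_prod_erase _ _ (Finset.mem_univ i₀)).symm
    have e2 : D ^ N = D ^ (n i₀) * ∏ i ∈ Finset.univ.erase i₀, D ^ (n i) := by
      rw [hNdef, ← Finset.prod_pow_eq_pow_sum,
        ← Finset.mul_prod_erase _ _ (Finset.mem_univ i₀)]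
    have e3 : (∏ i ∈ Finset.univ.erase i₀, D ^ (n i)) ≤ P * D ^ (D * l) := by
      calc (∏ i ∈ Finset.univ.erase i₀, D ^ (n i))
          ≤ ∏ i ∈ Finset.univ.erase i₀, (n i).factorial * D ^ D :=
            Finset.prod_le_prod' fun i _ => pow_le_factorial_mul D hD1 (n i)
        _ = P * (D ^ D) ^ (Finset.univ.erase i₀).card := by
            rw [Finset.prod_mul_distrib, Finset.prod_const, hPdef]
        _ ≤ P * D ^ (D * l) := by
            refine Nat.mul_le_mul_left _ ?_
            rw [← pow_mul]
            refine Nat.pow_le_pow_right hD1 ?_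
            have : (Finset.univ.erase i₀).card ≤ l := by
              calc (Finset.univ.erase i₀).card ≤ (Finset.univ : Finset (Fin l)).card :=
                    Finset.card_le_card (Finset.erase_subset _ _)
                _ = l := by simp
            exact Nat.mul_le_mul_left D this
    have hfin : (n i₀).factorial * P < (C * D ^ (D * l) * D ^ (n i₀)) * P := by
      calc (n i₀).factorial * P ≤ P1 * ((n i₀).factorial * P) :=
            Nat.le_mul_of_pos_left _ hP1pos
        _ = P1 * ∏ i, (n i).factorial := by rw [e1]
        _ < C * D ^ N := hmain
        _ = C * (D ^ (n i₀) * ∏ i ∈ Finset.univ.erase i₀, D ^ (n i)) := by rw [e2]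
        _ ≤ C * (D ^ (n i₀) * (P * D ^ (D * l))) :=
            Nat.mul_le_mul_left _ (Nat.mul_le_mul_left _ e3)
        _ = (C * D ^ (D * l) * D ^ (n i₀)) * P := by ring
    have h6 : (n i₀).factorial < C * D ^ (D * l) * D ^ (n i₀) :=
      Nat.lt_of_mul_lt_mul_right hfin
    have h7 : (n i₀).factorial < C₃ * D ^ (n i₀) :=
      lt_of_lt_of_le h6 (Nat.mul_le_mul_right _ (by omega))
    have := factorial_growth C₃ D (n i₀) (by omega) hD1 h7
    omega
  have hNle : N ≤ l * N₀ := by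
    rw [hNdef]
    calc ∑ i, n i ≤ ∑ _i : Fin l, N₀ := Finset.sum_le_sum fun i _ => hni i
      _ = l * N₀ := by simp [Finset.sum_const, mul_comm]
  have hCDM : C * D ^ N ≤ M := by
    rw [hMdef]
    exact Nat.mul_le_mul_left _ (Nat.pow_le_pow_right hD1 hNle)
  -- bound each z j
  have hzj : ∀ j, z j ≤ M := by
    intro j
    have h1 : p j ^ z j ≤ P1 := by
      rw [hP1def]
      exact Finset.single_le_prod' (fun i _ => Nat.one_le_pow _ _ (hp i).pos) (Finset.mem_univ j)
    have h2 : P1 ≤ P1 * ∏ i, (n i).factorial :=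
      Nat.le_mul_of_pos_right _ (Finset.prod_pos fun i _ => (n i).factorial_pos)
    have h3 : p j ^ z j < M := lt_of_le_of_lt (le_trans h1 h2) (lt_of_lt_of_le hmain hCDM)
    have h4 : 2 ^ z j ≤ p j ^ z j := Nat.pow_le_pow_left (hp j).two_le _
    have h5 : z j < 2 ^ z j := Nat.lt_two_pow_self
    omega
  -- bound x and y
  have hWM : b.natAbs * W < M := lt_of_lt_of_le hBig hCDM
  have habs2 : x.natAbs ^ s * y.natAbs ^ s * w.natAbs = b.natAbs * W := by
    have h := congrArg Int.natAbs heqW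
    rw [Int.natAbs_mul, Int.natAbs_mul, Int.natAbs_mul, Int.natAbs_pow, Int.natAbs_pow,
      Int.natAbs_natCast] at h
    exact h.symm
  have hxM : x.natAbs ≤ M := by
    have h1 : x.natAbs ≤ x.natAbs ^ s := Nat.le_self_pow hs.ne' _
    have h2 : x.natAbs ^ s ≤ x.natAbs ^ s * y.natAbs ^ s * w.natAbs := by
      have hy1 : 0 < y.natAbs ^ s := pow_pos (Int.natAbs_pos.mpr hy0) _
      have hw1 : 0 < w.natAbs := Int.natAbs_pos.mpr hw0
      calc x.natAbs ^ s ≤ x.natAbs ^ s * y.natAbs ^ s := Nat.le_mul_of_pos_right _ hy1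
        _ ≤ x.natAbs ^ s * y.natAbs ^ s * w.natAbs := Nat.le_mul_of_pos_right _ hw1
    exact le_trans h1 (le_trans h2 (by rw [habs2]; omega))
  have hyM : y.natAbs ≤ M := by
    have h1 : y.natAbs ≤ y.natAbs ^ s := Nat.le_self_pow hs.ne' _
    have h2 : y.natAbs ^ s ≤ x.natAbs ^ s * y.natAbs ^ s * w.natAbs := by
      have hx1 : 0 < x.natAbs ^ s := pow_pos (Int.natAbs_pos.mpr hx0) _
      have hw1 : 0 < w.natAbs := Int.natAbs_pos.mpr hw0
      calc y.natAbs ^ s ≤ x.natAbs ^ s * y.natAbs ^ s := Nat.le_mul_of_pos_left _ hx1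
        _ ≤ x.natAbs ^ s * y.natAbs ^ s * w.natAbs := Nat.le_mul_of_pos_right _ hw1
    exact le_trans h1 (le_trans h2 (by rw [habs2]; omega))
  -- conclude membership in the bounded box
  refine ⟨?_, ?_, ?_, ?_⟩
  · intro j _
    refine Set.mem_Iic.mpr ?_
    show z j ≤ B
    have := hzj j; omega
  · intro i _
    refine Set.mem_Iic.mpr ?_
    show n i ≤ B
    have := hni i; omega
  · refine Set.mem_Icc.mpr ?_
    show -(B:ℤ) ≤ x ∧ x ≤ (B:ℤ)
    omega
  · refine Set.mem_Icc.mpr ?_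
    show -(B:ℤ) ≤ y ∧ y ≤ (B:ℤ)
    omega
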